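/- Escape Lemma, part (ii): Let D ⊆ ℝ³ be open convex, x₀ ∈ D, b the signed distance to ∂D (positive inside D, negative outside), v ∈ ℝ³, x ∈ ℝ³, and t ≥ 0 with x + tv ∉ D. Suppose b is differentiable along the trajectory and for all s in [0, t] with x + sv ∉ D one has v·∇b(x + sv) ≥ g for some constant g > 0, and x + sv ∉ D for all s ∈ [0,t]. Then |x − x₀| ≥ t·g. -/
import Mathlib


noncomputable section

abbrev E3 := EuclideanSpace ℝ (Fin 3)

/-- Escape Lemma, part (ii): if the trajectory `x + s v` stays outside `D` on `[0, t]` and the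
directional derivative of the signed distance `b` along the trajectory is bounded below by
`g > 0` there, then `|x − x₀| ≥ t g`. -/
theorem escape_lemma_ii
    (D : Set E3) (hD : IsOpen D) (hconv : Convex ℝ D)
    (x₀ : E3) (hx₀ : x₀ ∈ D)
    (b : E3 → ℝ)
    (hb_in : ∀ x ∈ D, b x = Metric.infDist x Dᶜ)
    (hb_out : ∀ x ∉ D, b x = -Metric.infDist x D)
    (v x : E3) (t : ℝ) (ht : 0 ≤ t)
    (g : ℝ) (hg : 0 < g)
    (hout : ∀ s ∈ Set.Icc (0 : ℝ) t, x + s • v ∉ D)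
    (d : ℝ → ℝ)
    (hderiv : ∀ s ∈ Set.Icc (0 : ℝ) t, HasDerivAt (fun σ => b (x + σ • v)) (d s) s)
    (hdg : ∀ s ∈ Set.Icc (0 : ℝ) t, g ≤ d s) :
    t * g ≤ ‖x - x₀‖ := by
  set f : ℝ → ℝ := fun σ => b (x + σ • v) with hf
  have key : g * (t - 0) ≤ f t - f 0 := by
    apply (convex_Icc (0:ℝ) t).mul_sub_le_image_sub_of_le_deriv
    · exact fun s hs => (hderiv s hs).continuousAt.continuousWithinAt
    · intro s hs
      rw [interior_Icc] at hs
      exact ((hderiv s (Set.mem_Icc_of_Ioo hs)).differentiableAt).differentiableWithinAt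
    · intro s hs
      rw [interior_Icc] at hs
      rw [(hderiv s (Set.mem_Icc_of_Ioo hs)).deriv]
      exact hdg s (Set.mem_Icc_of_Ioo hs)
    · exact Set.left_mem_Icc.2 ht
    · exact Set.right_mem_Icc.2 ht
    · exact ht
  have h0 : (0:ℝ) ∈ Set.Icc (0:ℝ) t := Set.left_mem_Icc.2 ht
  have hT : t ∈ Set.Icc (0:ℝ) t := Set.right_mem_Icc.2 ht
  have hft : f t ≤ 0 := by
    have := hb_out _ (hout t hT)
    simp only [hf, this]
    simpa using Metric.infDist_nonneg
  have hf0 : f 0 = -Metric.infDist x D := by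
    have := hb_out _ (hout 0 h0)
    simpa [hf] using this
  have hle : Metric.infDist x D ≤ dist x x₀ := Metric.infDist_le_dist_of_mem hx₀
  have : t * g ≤ Metric.infDist x D := by
    rw [hf0] at key; nlinarith [hft]
  calc t * g ≤ Metric.infDist x D := this
    _ ≤ dist x x₀ := hle
    _ = ‖x - x₀‖ := dist_eq_norm x x₀
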